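/- Let M be a reduced multiplication R-module. Then for any ideals I and J of R, (0 :_M Ann_R(IJM)) = (0 :_M Ann_R(IM)) ∩ (0 :_M Ann_R(JM)). -/

import Mathlib

variable {R : Type*} [CommRing R] {M : Type*} [AddCommGroup M] [Module R M]

/-- `M` is a multiplication module: every submodule is `IM` for some ideal `I`. -/
def IsMultiplicationModule (R M : Type*) [CommRing R] [AddCommGroup M] [Module R M] : Prop :=
  ∀ N : Submodule R M, ∃ I : Ideal R, N = I • (⊤ : Submodule R M)

/-- A prime submodule. -/
def Submodule.IsPrimeSubmodule (P : Submodule R M) : Prop :=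
  P ≠ ⊤ ∧ ∀ (r : R) (m : M), r • m ∈ P → m ∈ P ∨ r ∈ P.colon ⊤

/-- `M` is reduced: the intersection of all prime submodules is zero. -/
def IsReducedModule (R M : Type*) [CommRing R] [AddCommGroup M] [Module R M] : Prop :=
  sInf {P : Submodule R M | P.IsPrimeSubmodule} = ⊥

/-- A minimal prime submodule of `M`. -/
def Submodule.IsMinimalPrime (P : Submodule R M) : Prop :=
  P.IsPrimeSubmodule ∧ ∀ Q : Submodule R M, Q.IsPrimeSubmodule → Q ≤ P → Q = P

/-- `𝔓_K`: the intersection of all minimal prime submodules containing `K`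
(equal to `M` if there are none). -/
def primeRad (K : Submodule R M) : Submodule R M :=
  sInf {P : Submodule R M | P.IsMinimalPrime ∧ K ≤ P}

/-- `V(K)`: the set of minimal prime submodules containing `K`. -/
def Vset (K : Submodule R M) : Set (Submodule R M) :=
  {P : Submodule R M | P.IsMinimalPrime ∧ K ≤ P}

/-- A quasi `z°`-submodule. -/
def IsQuasiZSubmodule (N : Submodule R M) : Prop :=
  N ≠ ⊤ ∧ ∀ a ∈ N.colon ⊤, primeRad (Ideal.span {a} • (⊤ : Submodule R M)) ≤ N

/-- `𝔓_I` for an ideal: intersection of all minimal prime ideals of `R` containing `I`. -/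
def idealPrimeRad (I : Ideal R) : Ideal R :=
  sInf {p : Ideal R | p ∈ minimalPrimes R ∧ I ≤ p}

/-- A `z°`-ideal of `R`. -/
def IsZIdeal (I : Ideal R) : Prop :=
  I ≠ ⊤ ∧ ∀ a ∈ I, idealPrimeRad (Ideal.span {a}) ≤ I

/-- `(0 :_M J)` for an ideal `J`. -/
def pointAnn (J : Ideal R) : Submodule R M where
  carrier := {m : M | ∀ j ∈ J, j • m = 0}
  zero_mem' := by intro j _; simp
  add_mem' := by
    intro a b ha hb j hj
    rw [smul_add, ha j hj, hb j hj, add_zero]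
  smul_mem' := by
    intro c m hm j hj
    rw [smul_comm, hm j hj, smul_zero]


lemma mem_pointAnn {J : Ideal R} {m : M} : m ∈ pointAnn (M := M) J ↔ ∀ j ∈ J, j • m = 0 :=
  Iff.rfl

lemma reduced_sq {hred : IsReducedModule R M} (r : R) (x : M) (h : r • r • x = 0) :
    r • x = 0 := by
  have hmem : r • x ∈ sInf {P : Submodule R M | P.IsPrimeSubmodule} := by
    rw [Submodule.mem_sInf]
    intro P hP
    rcases hP.2 r (r • x) (by rw [h]; exact P.zero_mem) with h1 | h2
    · exact h1
    · exact Submodule.mem_colon.mp h2 x trivial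
  rwa [hred, Submodule.mem_bot] at hmem

theorem stmt4 (hmul : IsMultiplicationModule R M) (hred : IsReducedModule R M)
    (I J : Ideal R) :
    pointAnn (M := M) ((⊥ : Submodule R M).colon ((((I * J : Ideal R)) • (⊤ : Submodule R M) : Submodule R M))) =
      pointAnn (M := M) ((⊥ : Submodule R M).colon ((I • (⊤ : Submodule R M) : Submodule R M))) ⊓
        pointAnn (M := M) ((⊥ : Submodule R M).colon ((J • (⊤ : Submodule R M) : Submodule R M))) := by
  apply le_antisymm
  · intro m hm
    rw [Submodule.mem_inf]
    constructor
    · rw [mem_pointAnn]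
      intro j hj
      refine hm j ?_
      rw [Submodule.mem_colon] at hj ⊢
      intro p hp
      exact hj p (Submodule.smul_mono Ideal.mul_le_left le_rfl hp)
    · rw [mem_pointAnn]
      intro j hj
      refine hm j ?_
      rw [Submodule.mem_colon] at hj ⊢
      intro p hp
      exact hj p (Submodule.smul_mono Ideal.mul_le_right le_rfl hp)
  · intro m hm
    rw [Submodule.mem_inf, mem_pointAnn, mem_pointAnn] at hm
    obtain ⟨hmA, hmB⟩ := hm
    rw [mem_pointAnn]
    intro c hc
    rw [Submodule.mem_colon] at hc
    -- c kills (I*J) • ⊤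
    have hckill : ∀ q ∈ (I * J : Ideal R) • (⊤ : Submodule R M), c • q = 0 := by
      intro q hq
      simpa using hc q hq
    obtain ⟨K, hK⟩ := hmul (Submodule.span R {m})
    have hmK : m ∈ K • (⊤ : Submodule R M) := by
      rw [← hK]; exact Submodule.mem_span_singleton_self m
    have hKm : ∀ z ∈ K • (⊤ : Submodule R M), ∃ s : R, s • m = z := by
      intro z hz
      rw [← hK] at hz
      exact Submodule.mem_span_singleton.mp hz
    -- Step 1 : for i ∈ I, (c*i) • m = 0
    have h1 : ∀ i ∈ I, (c * i) • m = 0 := by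
      intro i hi
      apply hmB
      rw [Submodule.mem_colon]
      intro p hp
      rw [Submodule.mem_bot]
      refine Submodule.smul_induction_on hp (fun j hj y _ => ?_) (fun x y hx hy => ?_)
      · have h : (c * i) • j • y = c • ((i * j) • y) := by
          rw [smul_smul, smul_smul]; congr 1; ring
        rw [h]
        exact hckill _ (Submodule.smul_mem_smul (Ideal.mul_mem_mul hi hj) trivial)
      · rw [smul_add, hx, hy, add_zero]
    -- Step 2 : for k ∈ K, (c*k) • m = 0
    have h3 : ∀ k ∈ K, (c * k) • m = 0 := by
      intro k hk
      apply hmA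
      rw [Submodule.mem_colon]
      intro p hp
      rw [Submodule.mem_bot]
      refine Submodule.smul_induction_on hp (fun i hi y _ => ?_) (fun x y hx hy => ?_)
      · have hky : k • y ∈ K • (⊤ : Submodule R M) :=
          Submodule.smul_mem_smul hk trivial
        obtain ⟨s, hs⟩ := hKm _ hky
        calc (c * k) • i • y = (c * i) • (k • y) := by
              rw [smul_smul, smul_smul]; congr 1; ring
          _ = s • ((c * i) • m) := by rw [← hs, smul_comm]
          _ = 0 := by rw [h1 i hi, smul_zero]
      · rw [smul_add, hx, hy, add_zero]
    -- Step 3 : for k ∈ K and any y, (c*k) • y = 0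
    have h6 : ∀ k ∈ K, ∀ y : M, (c * k) • y = 0 := by
      intro k hk y
      refine reduced_sq (hred := hred) (c * k) y ?_
      have hky : k • y ∈ K • (⊤ : Submodule R M) :=
        Submodule.smul_mem_smul hk trivial
      obtain ⟨s, hs⟩ := hKm _ hky
      calc (c * k) • (c * k) • y = (s * c) • ((c * k) • m) := by
            rw [mul_smul c k y, ← hs, smul_smul, smul_smul, smul_smul]
            congr 1; ring
        _ = 0 := by rw [h3 k hk, smul_zero]
    -- conclude
    have : ∀ z ∈ K • (⊤ : Submodule R M), c • z = 0 := by
      intro z hz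
      refine Submodule.smul_induction_on hz (fun k hk y _ => ?_) (fun x y hx hy => ?_)
      · rw [smul_smul]; exact h6 k hk y
      · rw [smul_add, hx, hy, add_zero]
    exact this m hmK
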